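/- Take e = 2, Λ = w_1Λ_1 + w_2Λ_2 with w_1, w_2 ∈ ℤ_{≥0} and w_1 + w_2 ≥ 1, and μ = Λ − b_1α_1 − b_2α_2 with b_1, b_2 ∈ ℤ_{≥0} and μ dominant. Then the pair (k⁻_{12}, k⁺_{12}) is of one of the forms (n, n), (n, n−1), or (n+1, n−1) for some integer n ≥ 0; moreover, it equals (n, n) if b_2 = n < b_1, or if b_1 = b_2 = n+1 and w_1 = 0; it equals (n, n−1) if b_1 = b_2 = n and w_1 ≠ 0 and w_2 ≠ 0; and it equals (n+1, n−1) if b_1 = n < b_2, or if b_1 = b_2 = n+1 and w_2 = 0. -/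

import Mathlib

namespace SleHat

/-- The standard basis vector `e_k` of `ℝ^{e+2}` (realized inside `ℕ → ℝ`). -/
def eVec (k : ℕ) : ℕ → ℝ := fun m => if m = k then 1 else 0

/-- The standard dot product on `ℝ^{e+2}`, pairing weights and coweights. -/
def dot (e : ℕ) (x y : ℕ → ℝ) : ℝ := ∑ k ∈ Finset.range (e + 2), x k * y k

/-- The simple roots of `ŝl_e`: `α_i = e_i − e_{i+1}` for `1 ≤ i ≤ e−1` and
`α_e = −e_1 + e_e − e_{e+1}`. -/
def simpleRoot (e i : ℕ) : ℕ → ℝ :=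
  if i = e then -eVec 1 + eVec e - eVec (e + 1) else eVec i - eVec (i + 1)

/-- The simple coroots of `ŝl_e`: `α_i^∨ = e_i − e_{i+1}` for `1 ≤ i ≤ e−1` and
`α_e^∨ = e_0 − e_1 + e_e`. -/
def simpleCoroot (e i : ℕ) : ℕ → ℝ :=
  if i = e then eVec 0 - eVec 1 + eVec e else eVec i - eVec (i + 1)

/-- The null root `δ = −e_{e+1}`. -/
def nullRoot (e : ℕ) : ℕ → ℝ := -eVec (e + 1)

/-- `δ^∨ = e_0`. -/
def deltaVee : ℕ → ℝ := eVec 0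

/-- The real roots `α_{ij;n} = e_i − e_j + nδ`. -/
def alphaIJ (e i j : ℕ) (n : ℤ) : ℕ → ℝ := eVec i - eVec j + (n : ℝ) • nullRoot e

/-- `α_{ij;n}` is a positive real root: `i ≠ j` in `{1,…,e}`, with `n ≥ 0` if `i < j` and
`n > 0` if `i > j`. -/
def IsPosRoot (e i j : ℕ) (n : ℤ) : Prop :=
  1 ≤ i ∧ i ≤ e ∧ 1 ≤ j ∧ j ≤ e ∧ i ≠ j ∧ (i < j → 0 ≤ n) ∧ (j < i → 0 < n)

/-- `ν` is dominant: `α_i^∨ · ν ≥ 0` for all `i ∈ {1,…,e}`. -/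
def Dominant (e : ℕ) (ν : ℕ → ℝ) : Prop :=
  ∀ i, 1 ≤ i → i ≤ e → 0 ≤ dot e (simpleCoroot e i) ν

/-- `ν ≤ Λ`: the difference `Λ − ν` is a `ℤ_{≥0}`-combination of the simple roots. -/
def LeRoot (e : ℕ) (ν Λ : ℕ → ℝ) : Prop :=
  ∃ c : ℕ → ℕ, Λ - ν = ∑ i ∈ Finset.Icc 1 e, (c i : ℝ) • simpleRoot e i

/-- The simple reflection `s_i(ν) = ν − (α_i^∨ · ν)·α_i`. -/
def sAct (e i : ℕ) (ν : ℕ → ℝ) : ℕ → ℝ :=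
  ν - dot e (simpleCoroot e i) ν • simpleRoot e i

/-- `ν ∈ supp(Λ)`, i.e. `wν ≤ Λ` for every element `w` of the Weyl group `W` generated by the
simple reflections `s_1, …, s_e` (each `s_i` is an involution, so the elements of `W` are
exactly the products of the generators). -/
def InSupp (e : ℕ) (Λ ν : ℕ → ℝ) : Prop :=
  ∀ L : List ℕ, (∀ i ∈ L, 1 ≤ i ∧ i ≤ e) →
    LeRoot e (L.foldr (fun i x => sAct e i x) ν) Λ

/-- The statistic `k⁺_{ij}` attached to a weight `μ` (for the highest weight `Λ`):
`max({−1} ∪ {n : α_{ij;n} ∈ N_μ})` if `i < j` and `max({0} ∪ {n : α_{ij;n} ∈ N_μ})` if `i > j`,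
where `N_μ` is the set of positive real roots `α` with `μ + α ∈ supp(Λ)`.
The statistic `k⁻_{ij}` is `k⁺_{ji}`. -/
noncomputable def kplus (e : ℕ) (Λ μ : ℕ → ℝ) (i j : ℕ) : ℤ :=
  if i < j then
    sSup ({-1} ∪ {n : ℤ | 0 ≤ n ∧ InSupp e Λ (μ + alphaIJ e i j n)})
  else
    sSup ({0} ∪ {n : ℤ | 0 < n ∧ InSupp e Λ (μ + alphaIJ e i j n)})

/-- The orthogonal projection of `ℝ^{e+2}` onto the subspace
`𝔥* = {h : h_1 + ⋯ + h_e = 0}`. -/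
noncomputable def proj (e : ℕ) (v : ℕ → ℝ) : ℕ → ℝ :=
  fun k => if 1 ≤ k ∧ k ≤ e then v k - (∑ r ∈ Finset.Icc 1 e, v r) / e else v k

/-- The fundamental weight `Λ_i`: the orthogonal projection onto `𝔥*` of
`e_0 + e_1 + ⋯ + e_i`. -/
noncomputable def fundWt (e i : ℕ) : ℕ → ℝ := proj e (∑ k ∈ Finset.range (i + 1), eVec k)

/-- A partition, encoded by its (weakly decreasing, eventually zero) sequence of parts
`p 0 ≥ p 1 ≥ ⋯` (0-indexed rows). -/
def IsPartition (p : ℕ → ℕ) : Prop :=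
  (∀ a b, a ≤ b → p b ≤ p a) ∧ ∃ M, ∀ k, M ≤ k → p k = 0

/-- `b_i(λ)`: the number of boxes of `λ` of residue `≡ i (mod e)`.  Boxes are pairs `(r, c)`
(0-indexed) with `c < p r`; the box `(r, c)` has residue `c − r (mod e)`. -/
noncomputable def resCount (e : ℕ) (p : ℕ → ℕ) (i : ℕ) : ℕ :=
  Set.ncard {rc : ℕ × ℕ | rc.2 < p rc.1 ∧
    ((rc.2 : ℤ) - (rc.1 : ℤ)) % (e : ℤ) = (i : ℤ) % (e : ℤ)}

/-- The weight of a partition: `Λ_e − Σ_{i=1}^e b_i(λ) α_i`. -/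
noncomputable def wtPartition (e : ℕ) (p : ℕ → ℕ) : ℕ → ℝ :=
  fundWt e e - ∑ i ∈ Finset.Icc 1 e, (resCount e p i : ℝ) • simpleRoot e i

end SleHat

namespace SleHat



def pstep (W1 W2 : ℤ) (i : ℕ) (p : ℤ × ℤ) : ℤ × ℤ :=
  if i = 1 then (W1 - p.1 + 2 * p.2, p.2) else (p.1, W2 + 2 * p.1 - p.2)

def PValid (L : List ℕ) : Prop := ∀ i ∈ L, i = 1 ∨ i = 2

def PSupp (W1 W2 : ℤ) (p : ℤ × ℤ) : Prop :=
  ∀ L : List ℕ, PValid L →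
    0 ≤ (L.foldr (pstep W1 W2) p).1 ∧ 0 ≤ (L.foldr (pstep W1 W2) p).2

lemma pstep_one (W1 W2 : ℤ) (p : ℤ × ℤ) : pstep W1 W2 1 p = (W1 - p.1 + 2*p.2, p.2) := by
  simp [pstep]

lemma pstep_two (W1 W2 : ℤ) (p : ℤ × ℤ) : pstep W1 W2 2 p = (p.1, W2 + 2*p.1 - p.2) := by
  simp [pstep]

lemma pstep_invol (W1 W2 : ℤ) (i : ℕ) (p : ℤ × ℤ) :
    pstep W1 W2 i (pstep W1 W2 i p) = p := by
  by_cases h : i = 1 <;> simp [pstep, h, Prod.ext_iff] <;> omega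

lemma psupp_step (W1 W2 : ℤ) {i : ℕ} (hi : i = 1 ∨ i = 2) (p : ℤ × ℤ) :
    PSupp W1 W2 (pstep W1 W2 i p) ↔ PSupp W1 W2 p := by
  have hvalapp : ∀ L : List ℕ, PValid L → PValid (L ++ [i]) := by
    intro L hL j hj
    rcases List.mem_append.1 hj with h' | h'
    · exact hL j h'
    · simp only [List.mem_singleton] at h'; subst h'; exact hi
  constructor
  · intro h L hL
    have h2 := h (L ++ [i]) (hvalapp L hL)
    rwa [List.foldr_append, show List.foldr (pstep W1 W2) (pstep W1 W2 i p) [i] =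
      pstep W1 W2 i (pstep W1 W2 i p) from rfl, pstep_invol] at h2
  · intro h L hL
    have h2 := h (L ++ [i]) (hvalapp L hL)
    rwa [List.foldr_append] at h2

lemma pinv (W1 W2 : ℤ) (hW1 : 0 ≤ W1) (hW2 : 0 ≤ W2) :
    ∀ L : List ℕ, PValid L → L.Chain' (· ≠ ·) →
    ∀ p : ℤ × ℤ, 0 ≤ p.1 → 0 ≤ p.2 → 2*p.1 ≤ W1 + 2*p.2 → 2*p.2 ≤ W2 + 2*p.1 →
    (0 ≤ (L.foldr (pstep W1 W2) p).1 ∧ 0 ≤ (L.foldr (pstep W1 W2) p).2) ∧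
    (L.head? = some 1 → 2*(L.foldr (pstep W1 W2) p).2 ≤ W2 + 2*(L.foldr (pstep W1 W2) p).1) ∧
    (L.head? = some 2 → 2*(L.foldr (pstep W1 W2) p).1 ≤ W1 + 2*(L.foldr (pstep W1 W2) p).2) := by
  intro L
  induction L with
  | nil =>
    intro _ _ p h1 h2 h3 h4
    exact ⟨⟨h1, h2⟩, by simp, by simp⟩
  | cons i T ih =>
    intro hV hC p h1 h2 h3 h4
    have hVT : PValid T := fun j hj => hV j (List.mem_cons_of_mem _ hj)
    have hCT : T.Chain' (· ≠ ·) := hC.tail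
    obtain ⟨⟨hq1, hq2⟩, hh1, hh2⟩ := ih hVT hCT p h1 h2 h3 h4
    set r := T.foldr (pstep W1 W2) p with hr
    have hi : i = 1 ∨ i = 2 := hV i List.mem_cons_self
    have hhead : ∀ j, T.head? = some j → i ≠ j := by
      intro j hj
      have := List.isChain_cons.1 hC
      exact this.1 j hj
    rcases hi with hi | hi <;> subst hi
    · -- i = 1 : need P1 r
      have hP1r : 2*r.1 ≤ W1 + 2*r.2 := by
        cases T with
        | nil => simpa [hr] using h3
        | cons j T'' =>
          have hj : j = 1 ∨ j = 2 := hVT j List.mem_cons_self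
          have hne : (1:ℕ) ≠ j := hhead j rfl
          rcases hj with hj | hj
          · exact absurd hj.symm hne
          · exact hh2 (by simp [hj])
      simp only [List.foldr_cons, List.head?_cons, pstep_one, ← hr]
      refine ⟨⟨by omega, by omega⟩, fun _ => by omega, fun h => by simp at h⟩
    · -- i = 2 : need P2 r
      have hP2r : 2*r.2 ≤ W2 + 2*r.1 := by
        cases T with
        | nil => simpa [hr] using h4
        | cons j T'' =>
          have hj : j = 1 ∨ j = 2 := hVT j List.mem_cons_self
          have hne : (2:ℕ) ≠ j := hhead j rfl
          rcases hj with hj | hj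
          · exact hh1 (by simp [hj])
          · exact absurd hj.symm hne
      simp only [List.foldr_cons, List.head?_cons, pstep_two, ← hr]
      refine ⟨⟨by omega, by omega⟩, fun h => by simp at h, fun _ => by omega⟩

lemma preduce (W1 W2 : ℤ) : ∀ L : List ℕ, PValid L → ∃ L' : List ℕ,
    PValid L' ∧ L'.Chain' (· ≠ ·) ∧
    ∀ p, L'.foldr (pstep W1 W2) p = L.foldr (pstep W1 W2) p := by
  intro L
  induction L with
  | nil => exact fun _ => ⟨[], by intro j hj; simp at hj, List.isChain_nil, fun p => rfl⟩
  | cons i T ih =>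
    intro hV
    have hVT : PValid T := fun j hj => hV j (List.mem_cons_of_mem _ hj)
    have hiv : i = 1 ∨ i = 2 := hV i List.mem_cons_self
    obtain ⟨L', hV', hC', hF'⟩ := ih hVT
    cases L' with
    | nil =>
      refine ⟨[i], ?_, List.isChain_singleton _, ?_⟩
      · intro j hj; simp only [List.mem_singleton] at hj; subst hj; exact hiv
      · intro p
        show pstep W1 W2 i p = pstep W1 W2 i (T.foldr (pstep W1 W2) p)
        rw [← hF' p]; rfl
    | cons j T'' =>
      by_cases hij : i = j
      · refine ⟨T'', fun k hk => hV' k (List.mem_cons_of_mem _ hk), hC'.tail, ?_⟩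
        intro p
        have h1 : (i :: T).foldr (pstep W1 W2) p = pstep W1 W2 i (T.foldr (pstep W1 W2) p) := rfl
        rw [h1, ← hF' p]
        show T''.foldr (pstep W1 W2) p = pstep W1 W2 i (pstep W1 W2 j (T''.foldr (pstep W1 W2) p))
        rw [hij, pstep_invol]
      · refine ⟨i :: j :: T'', ?_, ?_, ?_⟩
        · intro k hk
          rcases List.mem_cons.1 hk with h' | h'
          · subst h'; exact hiv
          · exact hV' k h'
        · exact List.isChain_cons_cons.2 ⟨hij, hC'⟩
        · intro p
          show pstep W1 W2 i ((j :: T'').foldr (pstep W1 W2) p) = pstep W1 W2 i (T.foldr (pstep W1 W2) p)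
          rw [hF' p]

lemma psupp_of_dom {W1 W2 : ℤ} (hW1 : 0 ≤ W1) (hW2 : 0 ≤ W2) {p : ℤ × ℤ}
    (h1 : 0 ≤ p.1) (h2 : 0 ≤ p.2) (h3 : 2*p.1 ≤ W1 + 2*p.2) (h4 : 2*p.2 ≤ W2 + 2*p.1) :
    PSupp W1 W2 p := by
  intro L hL
  obtain ⟨L', hV', hC', hF'⟩ := preduce W1 W2 L hL
  rw [← hF' p]
  exact (pinv W1 W2 hW1 hW2 L' hV' hC' p h1 h2 h3 h4).1

lemma psupp_quad {W1 W2 : ℤ} {p : ℤ × ℤ} (h : PSupp W1 W2 p) : 0 ≤ p.1 ∧ 0 ≤ p.2 :=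
  h [] (by intro j hj; simp at hj)

lemma psupp_dom' (W1 W2 a c : ℤ) (hW1 : 0 ≤ W1) (hW2 : 0 ≤ W2) (h1 : 0 ≤ a) (h2 : 0 ≤ c)
    (h3 : 2*a ≤ W1 + 2*c) (h4 : 2*c ≤ W2 + 2*a) : PSupp W1 W2 (a, c) :=
  psupp_of_dom hW1 hW2 h1 h2 h3 h4

lemma psupp_a0 (W1 W2 a : ℤ) (hW1 : 0 ≤ W1) (hW2 : 0 ≤ W2) (ha : 0 ≤ a) (h : a ≤ W1) :
    PSupp W1 W2 (a, 0) := by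
  rcases le_or_gt (2*a) W1 with h2 | h2
  · exact psupp_dom' _ _ _ _ hW1 hW2 ha le_rfl (by omega) (by omega)
  · have hs : PSupp W1 W2 (W1 - a, 0) :=
      psupp_dom' _ _ _ _ hW1 hW2 (by omega) le_rfl (by omega) (by omega)
    have e : pstep W1 W2 1 (a, 0) = (W1 - a, 0) := by rw [pstep_one]; norm_num
    exact (psupp_step W1 W2 (Or.inl rfl) (a, 0)).1 (by rw [e]; exact hs)

lemma psupp_0c (W1 W2 c : ℤ) (hW1 : 0 ≤ W1) (hW2 : 0 ≤ W2) (hc : 0 ≤ c) (h : c ≤ W2) :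
    PSupp W1 W2 (0, c) := by
  rcases le_or_gt (2*c) W2 with h2 | h2
  · exact psupp_dom' _ _ _ _ hW1 hW2 le_rfl hc (by omega) (by omega)
  · have hs : PSupp W1 W2 (0, W2 - c) :=
      psupp_dom' _ _ _ _ hW1 hW2 le_rfl (by omega) (by omega) (by omega)
    have e : pstep W1 W2 2 (0, c) = (0, W2 - c) := by rw [pstep_two]; norm_num
    exact (psupp_step W1 W2 (Or.inr rfl) (0, c)).1 (by rw [e]; exact hs)

lemma psupp_21 (W1 W2 : ℤ) (h1 : W1 = 0) (hW2 : 1 ≤ W2) : PSupp W1 W2 (2, 1) := by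
  have hs : PSupp W1 W2 (0, 1) := psupp_0c W1 W2 1 (by omega) (by omega) (by omega) hW2
  have e : pstep W1 W2 1 (2, 1) = (0, 1) := by rw [pstep_one]; rw [h1]; norm_num
  exact (psupp_step W1 W2 (Or.inl rfl) (2, 1)).1 (by rw [e]; exact hs)

lemma psupp_12 (W1 W2 : ℤ) (h2 : W2 = 0) (hW1 : 1 ≤ W1) : PSupp W1 W2 (1, 2) := by
  have hs : PSupp W1 W2 (1, 0) := psupp_a0 W1 W2 1 (by omega) (by omega) (by omega) hW1
  have e : pstep W1 W2 2 (1, 2) = (1, 0) := by rw [pstep_two]; rw [h2]; norm_num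
  exact (psupp_step W1 W2 (Or.inr rfl) (1, 2)).1 (by rw [e]; exact hs)

lemma npsupp_10 (W1 W2 : ℤ) (h1 : W1 = 0) : ¬ PSupp W1 W2 (1, 0) := by
  intro h
  have := h [1] (by intro j hj; simp at hj; omega)
  simp only [List.foldr_cons, List.foldr_nil, pstep_one] at this
  omega

lemma npsupp_01 (W1 W2 : ℤ) (h2 : W2 = 0) : ¬ PSupp W1 W2 (0, 1) := by
  intro h
  have := h [2] (by intro j hj; simp at hj; omega)
  simp only [List.foldr_cons, List.foldr_nil, pstep_two] at this
  omega

lemma csSup_union_eq {d t : ℤ} {Φ : ℤ → Prop} (hdt : d ≤ t) (hmem : t = d ∨ Φ t)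
    (hub : ∀ n, Φ n → n ≤ t) : sSup ({d} ∪ {n : ℤ | Φ n}) = t := by
  apply IsGreatest.csSup_eq
  constructor
  · rcases hmem with h | h
    · exact Or.inl (by simp [h])
    · exact Or.inr h
  · intro n hn
    rcases hn with hn | hn
    · simp only [Set.mem_singleton_iff] at hn; omega
    · exact hub n hn


-- === new material ===

noncomputable def wtv (w1 w2 : ℕ) (a c : ℝ) : ℕ → ℝ := fun k =>
  if k = 0 then (w1 : ℝ) + w2
  else if k = 1 then w1/2 - a + c
  else if k = 2 then -(w1/2) + a - c
  else if k = 3 then c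
  else 0

lemma eVec_apply (k m : ℕ) : eVec k m = if m = k then 1 else 0 := rfl

lemma sum_Icc12 {M : Type*} [AddCommMonoid M] (g : ℕ → M) :
    ∑ i ∈ Finset.Icc 1 2, g i = g 1 + g 2 := by
  rw [show Finset.Icc 1 2 = ({1, 2} : Finset ℕ) from rfl]
  rw [Finset.sum_insert (by decide), Finset.sum_singleton]

lemma fundWt21_eval : fundWt 2 1 = fun k => if k = 0 then 1 else if k = 1 then (1:ℝ)/2
    else if k = 2 then -(1/2) else 0 := by
  have hv : (∑ k ∈ Finset.range 2, eVec k) =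
      fun m => if m = 0 then (1:ℝ) else if m = 1 then 1 else 0 := by
    funext m
    simp only [Finset.sum_apply, Finset.sum_range_succ, Finset.sum_range_zero, eVec_apply]
    split_ifs <;> first | exact (‹False›).elim | (exfalso; omega) | ring1 | norm_num
  funext k
  simp only [fundWt, proj, hv, sum_Icc12]
  split_ifs <;> first | exact (‹False›).elim | (exfalso; omega) | ring1 | norm_num

lemma fundWt22_eval : fundWt 2 2 = fun k => if k = 0 then (1:ℝ) else 0 := by
  have hv : (∑ k ∈ Finset.range 3, eVec k) =
      fun m => if m = 0 then (1:ℝ) else if m = 1 then 1 else if m = 2 then 1 else 0 := by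
    funext m
    simp only [Finset.sum_apply, Finset.sum_range_succ, Finset.sum_range_zero, eVec_apply]
    split_ifs <;> first | exact (‹False›).elim | (exfalso; omega) | ring1 | norm_num
  funext k
  simp only [fundWt, proj, hv, sum_Icc12]
  split_ifs <;> first | exact (‹False›).elim | (exfalso; omega) | ring1 | norm_num

lemma wtv_eq_Lam (w1 w2 : ℕ) :
    (w1 : ℝ) • fundWt 2 1 + (w2 : ℝ) • fundWt 2 2 = wtv w1 w2 0 0 := by
  funext k
  simp only [fundWt21_eval, fundWt22_eval, wtv, Pi.add_apply, Pi.smul_apply, smul_eq_mul]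
  split_ifs <;> first | exact (‹False›).elim | (exfalso; omega) | ring1 | norm_num

lemma wtv_sub_root1 (w1 w2 : ℕ) (a c r : ℝ) :
    wtv w1 w2 a c - r • simpleRoot 2 1 = wtv w1 w2 (a + r) c := by
  funext k
  simp only [wtv, simpleRoot, eVec_apply, ite_apply, Pi.sub_apply, Pi.smul_apply, Pi.add_apply,
    Pi.neg_apply, smul_eq_mul, reduceIte]
  split_ifs <;> first | exact (‹False›).elim | (exfalso; omega) | ring1 | norm_num

lemma wtv_sub_root2 (w1 w2 : ℕ) (a c r : ℝ) :
    wtv w1 w2 a c - r • simpleRoot 2 2 = wtv w1 w2 a (c + r) := by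
  funext k
  simp only [wtv, simpleRoot, eVec_apply, ite_apply, Pi.sub_apply, Pi.smul_apply, Pi.add_apply,
    Pi.neg_apply, smul_eq_mul, reduceIte]
  split_ifs <;> first | exact (‹False›).elim | (exfalso; omega) | ring1 | norm_num

lemma wtv_add_alpha12 (w1 w2 : ℕ) (a c : ℝ) (n : ℤ) :
    wtv w1 w2 a c + alphaIJ 2 1 2 n = wtv w1 w2 (a - 1 - n) (c - n) := by
  funext k
  simp only [wtv, alphaIJ, nullRoot, eVec_apply, ite_apply, Pi.sub_apply, Pi.smul_apply,
    Pi.add_apply, Pi.neg_apply, smul_eq_mul, reduceIte]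
  split_ifs <;> first | exact (‹False›).elim | (exfalso; omega) | ring1 | norm_num

lemma wtv_add_alpha21 (w1 w2 : ℕ) (a c : ℝ) (n : ℤ) :
    wtv w1 w2 a c + alphaIJ 2 2 1 n = wtv w1 w2 (a + 1 - n) (c - n) := by
  funext k
  simp only [wtv, alphaIJ, nullRoot, eVec_apply, ite_apply, Pi.sub_apply, Pi.smul_apply,
    Pi.add_apply, Pi.neg_apply, smul_eq_mul, reduceIte]
  split_ifs <;> first | exact (‹False›).elim | (exfalso; omega) | ring1 | norm_num

lemma dot_expand (x y : ℕ → ℝ) :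
    dot 2 x y = x 0 * y 0 + x 1 * y 1 + x 2 * y 2 + x 3 * y 3 := by
  show ∑ k ∈ Finset.range 4, x k * y k = _
  rw [Finset.sum_range_succ, Finset.sum_range_succ, Finset.sum_range_succ,
    Finset.sum_range_succ, Finset.sum_range_zero]
  ring

lemma dot_coroot1 (w1 w2 : ℕ) (a c : ℝ) :
    dot 2 (simpleCoroot 2 1) (wtv w1 w2 a c) = w1 - 2*a + 2*c := by
  rw [dot_expand]
  simp only [simpleCoroot, eVec_apply, ite_apply, wtv, Pi.sub_apply, Pi.add_apply, reduceIte]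
  norm_num
  ring

lemma dot_coroot2 (w1 w2 : ℕ) (a c : ℝ) :
    dot 2 (simpleCoroot 2 2) (wtv w1 w2 a c) = w2 + 2*a - 2*c := by
  rw [dot_expand]
  simp only [simpleCoroot, eVec_apply, ite_apply, wtv, Pi.sub_apply, Pi.add_apply, reduceIte]
  norm_num
  ring

lemma sAct1_wtv (w1 w2 : ℕ) (a c : ℝ) :
    sAct 2 1 (wtv w1 w2 a c) = wtv w1 w2 (w1 - a + 2*c) c := by
  unfold sAct
  rw [dot_coroot1, wtv_sub_root1]
  have h : a + ((w1:ℝ) - 2*a + 2*c) = (w1:ℝ) - a + 2*c := by ring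
  rw [h]

lemma sAct2_wtv (w1 w2 : ℕ) (a c : ℝ) :
    sAct 2 2 (wtv w1 w2 a c) = wtv w1 w2 a (w2 + 2*a - c) := by
  unfold sAct
  rw [dot_coroot2, wtv_sub_root2]
  have h : c + ((w2:ℝ) + 2*a - 2*c) = (w2:ℝ) + 2*a - c := by ring
  rw [h]

lemma leRoot_iff (w1 w2 : ℕ) (a c : ℤ) :
    LeRoot 2 (wtv w1 w2 (a:ℝ) (c:ℝ)) (wtv w1 w2 0 0) ↔ 0 ≤ a ∧ 0 ≤ c := by
  constructor
  · rintro ⟨f, hf⟩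
    rw [sum_Icc12] at hf
    have h3 := congrFun hf 3
    have h1 := congrFun hf 1
    simp only [wtv, simpleRoot, eVec_apply, ite_apply, Pi.sub_apply, Pi.add_apply, Pi.smul_apply,
      Pi.neg_apply, smul_eq_mul, reduceIte] at h3 h1
    norm_num at h3 h1
    have hc : c = (f 2 : ℤ) := by exact_mod_cast h3
    have h1' : (a : ℝ) - c = (f 1 : ℝ) - (f 2 : ℝ) := by linarith
    have ha : a - c = (f 1 : ℤ) - (f 2 : ℤ) := by exact_mod_cast h1'
    constructor <;> omega
  · rintro ⟨ha, hc⟩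
    refine ⟨fun i => if i = 1 then a.toNat else c.toNat, ?_⟩
    rw [sum_Icc12]
    have h1 : ((a.toNat : ℝ)) = (a : ℝ) := by exact_mod_cast Int.toNat_of_nonneg ha
    have h2 : ((c.toNat : ℝ)) = (c : ℝ) := by exact_mod_cast Int.toNat_of_nonneg hc
    funext k
    simp only [wtv, simpleRoot, eVec_apply, ite_apply, Pi.sub_apply, Pi.add_apply, Pi.smul_apply,
      Pi.neg_apply, smul_eq_mul, reduceIte, Nat.cast_ite, h1, h2]
    split_ifs <;> first | exact (‹False›).elim | (exfalso; omega) | ring1 | norm_num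


lemma psupp_congr {W1 W2 : ℤ} {a c a' c' : ℤ} (ha : a = a') (hc : c = c')
    (h : PSupp W1 W2 (a', c')) : PSupp W1 W2 (a, c) := by rw [ha, hc]; exact h

lemma foldr_wtv (w1 w2 : ℕ) : ∀ (L : List ℕ), PValid L → ∀ (a c : ℤ),
    L.foldr (fun i x => sAct 2 i x) (wtv w1 w2 (a:ℝ) (c:ℝ)) =
      wtv w1 w2 (((L.foldr (pstep (w1:ℤ) (w2:ℤ)) (a, c)).1 : ℤ) : ℝ)
        (((L.foldr (pstep (w1:ℤ) (w2:ℤ)) (a, c)).2 : ℤ) : ℝ) := by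
  intro L
  induction L with
  | nil => intro _ a c; rfl
  | cons i T ih =>
    intro hV a c
    have hVT : PValid T := fun j hj => hV j (List.mem_cons_of_mem _ hj)
    have hi : i = 1 ∨ i = 2 := hV i List.mem_cons_self
    simp only [List.foldr_cons]
    rw [ih hVT a c]
    set q := T.foldr (pstep (w1:ℤ) (w2:ℤ)) (a, c) with hq
    rcases hi with hi | hi <;> subst hi
    · have e1 : (pstep (w1:ℤ) (w2:ℤ) 1 q).1 = (w1:ℤ) - q.1 + 2*q.2 := by rw [pstep_one]
      have e2 : (pstep (w1:ℤ) (w2:ℤ) 1 q).2 = q.2 := by rw [pstep_one]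
      have e3 : (((w1:ℤ) - q.1 + 2*q.2 : ℤ) : ℝ) = (w1:ℝ) - (q.1:ℝ) + 2*(q.2:ℝ) := by
        push_cast; ring
      rw [sAct1_wtv, e1, e2, e3]
    · have e1 : (pstep (w1:ℤ) (w2:ℤ) 2 q).1 = q.1 := by rw [pstep_two]
      have e2 : (pstep (w1:ℤ) (w2:ℤ) 2 q).2 = (w2:ℤ) + 2*q.1 - q.2 := by rw [pstep_two]
      have e3 : (((w2:ℤ) + 2*q.1 - q.2 : ℤ) : ℝ) = (w2:ℝ) + 2*(q.1:ℝ) - (q.2:ℝ) := by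
        push_cast; ring
      rw [sAct2_wtv, e1, e2, e3]

lemma inSupp_iff (w1 w2 : ℕ) (a c : ℤ) :
    InSupp 2 (wtv w1 w2 0 0) (wtv w1 w2 (a:ℝ) (c:ℝ)) ↔ PSupp (w1:ℤ) (w2:ℤ) (a, c) := by
  constructor
  · intro h L hL
    have hL' : ∀ i ∈ L, 1 ≤ i ∧ i ≤ 2 := by
      intro i hi; rcases hL i hi with h' | h' <;> omega
    have h2 := h L hL'
    rw [foldr_wtv w1 w2 L hL a c, leRoot_iff] at h2
    exact h2
  · intro h L hL
    have hV : PValid L := by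
      intro i hi; have := hL i hi; omega
    rw [foldr_wtv w1 w2 L hV a c, leRoot_iff]
    exact h L hV

lemma kplus12_eq (w1 w2 b1 b2 : ℕ) :
    kplus 2 (wtv w1 w2 0 0) (wtv w1 w2 (b1:ℝ) (b2:ℝ)) 1 2 =
      sSup ({-1} ∪ {n : ℤ | 0 ≤ n ∧ PSupp (w1:ℤ) (w2:ℤ) ((b1:ℤ) - 1 - n, (b2:ℤ) - n)}) := by
  have hset : {n : ℤ | 0 ≤ n ∧ InSupp 2 (wtv w1 w2 0 0) (wtv w1 w2 (b1:ℝ) (b2:ℝ) + alphaIJ 2 1 2 n)}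
      = {n : ℤ | 0 ≤ n ∧ PSupp (w1:ℤ) (w2:ℤ) ((b1:ℤ) - 1 - n, (b2:ℤ) - n)} := by
    ext n
    simp only [Set.mem_setOf_eq, and_congr_right_iff]
    intro _
    have ea : (((b1:ℤ) - 1 - n : ℤ) : ℝ) = (b1:ℝ) - 1 - (n:ℝ) := by push_cast; ring
    have ec : (((b2:ℤ) - n : ℤ) : ℝ) = (b2:ℝ) - (n:ℝ) := by push_cast; ring
    have e : wtv w1 w2 (b1:ℝ) (b2:ℝ) + alphaIJ 2 1 2 n
        = wtv w1 w2 (((b1:ℤ) - 1 - n : ℤ) : ℝ) (((b2:ℤ) - n : ℤ) : ℝ) := by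
      rw [wtv_add_alpha12, ea, ec]
    rw [e, inSupp_iff w1 w2]
  unfold kplus
  rw [if_pos (by norm_num : (1:ℕ) < 2), hset]

lemma kplus21_eq (w1 w2 b1 b2 : ℕ) :
    kplus 2 (wtv w1 w2 0 0) (wtv w1 w2 (b1:ℝ) (b2:ℝ)) 2 1 =
      sSup ({0} ∪ {n : ℤ | 0 < n ∧ PSupp (w1:ℤ) (w2:ℤ) ((b1:ℤ) + 1 - n, (b2:ℤ) - n)}) := by
  have hset : {n : ℤ | 0 < n ∧ InSupp 2 (wtv w1 w2 0 0) (wtv w1 w2 (b1:ℝ) (b2:ℝ) + alphaIJ 2 2 1 n)}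
      = {n : ℤ | 0 < n ∧ PSupp (w1:ℤ) (w2:ℤ) ((b1:ℤ) + 1 - n, (b2:ℤ) - n)} := by
    ext n
    simp only [Set.mem_setOf_eq, and_congr_right_iff]
    intro _
    have ea : (((b1:ℤ) + 1 - n : ℤ) : ℝ) = (b1:ℝ) + 1 - (n:ℝ) := by push_cast; ring
    have ec : (((b2:ℤ) - n : ℤ) : ℝ) = (b2:ℝ) - (n:ℝ) := by push_cast; ring
    have e : wtv w1 w2 (b1:ℝ) (b2:ℝ) + alphaIJ 2 2 1 n
        = wtv w1 w2 (((b1:ℤ) + 1 - n : ℤ) : ℝ) (((b2:ℤ) - n : ℤ) : ℝ) := by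
      rw [wtv_add_alpha21, ea, ec]
    rw [e, inSupp_iff w1 w2]
  unfold kplus
  rw [if_neg (by norm_num : ¬ (2:ℕ) < 1), hset]

lemma central (w1 w2 b1 b2 : ℕ) (hw : 1 ≤ w1 + w2)
    (hd1 : 0 ≤ (w1:ℤ) - 2*(b1:ℤ) + 2*(b2:ℤ)) (hd2 : 0 ≤ (w2:ℤ) + 2*(b1:ℤ) - 2*(b2:ℤ)) :
    ∃ KB KA : ℤ,
      sSup ({0} ∪ {n : ℤ | 0 < n ∧ PSupp (w1:ℤ) (w2:ℤ) ((b1:ℤ) + 1 - n, (b2:ℤ) - n)}) = KB ∧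
      sSup ({-1} ∪ {n : ℤ | 0 ≤ n ∧ PSupp (w1:ℤ) (w2:ℤ) ((b1:ℤ) - 1 - n, (b2:ℤ) - n)}) = KA ∧
      ( ((b2:ℤ) < b1 ∧ KB = b2 ∧ KA = b2)
      ∨ ((b1:ℤ) < b2 ∧ KB = (b1:ℤ) + 1 ∧ KA = (b1:ℤ) - 1)
      ∨ ((b1:ℤ) = b2 ∧ b1 = 0 ∧ KB = 0 ∧ KA = -1)
      ∨ ((b1:ℤ) = b2 ∧ 1 ≤ b1 ∧ w1 = 0 ∧ KB = (b1:ℤ) - 1 ∧ KA = (b1:ℤ) - 1)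
      ∨ ((b1:ℤ) = b2 ∧ 1 ≤ b1 ∧ w2 = 0 ∧ KB = (b1:ℤ) ∧ KA = (b1:ℤ) - 2)
      ∨ ((b1:ℤ) = b2 ∧ 1 ≤ b1 ∧ 1 ≤ w1 ∧ 1 ≤ w2 ∧ KB = (b1:ℤ) ∧ KA = (b1:ℤ) - 1)) := by
  have hW1 : 0 ≤ (w1:ℤ) := Int.ofNat_nonneg w1
  have hW2 : 0 ≤ (w2:ℤ) := Int.ofNat_nonneg w2
  rcases lt_trichotomy (b1:ℤ) (b2:ℤ) with h | h | h
  · -- b1 < b2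
    refine ⟨(b1:ℤ) + 1, (b1:ℤ) - 1, ?_, ?_, Or.inr (Or.inl ⟨h, rfl, rfl⟩)⟩
    · refine csSup_union_eq (by omega)
        (Or.inr ⟨by omega, psupp_congr (by ring) (by ring)
          (psupp_dom' _ _ 0 ((b2:ℤ) - b1 - 1) hW1 hW2 le_rfl (by omega) (by omega) (by omega))⟩)
        ?_
      intro n ⟨hn, hs⟩
      have hq := psupp_quad hs
      omega
    · refine csSup_union_eq (by omega) ?_ ?_
      · rcases eq_or_lt_of_le (by omega : (0:ℤ) ≤ (b1:ℤ)) with h0 | h0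
        · exact Or.inl (by omega)
        · exact Or.inr ⟨by omega, psupp_congr (by ring) (by ring)
            (psupp_0c _ _ ((b2:ℤ) - b1 + 1) hW1 hW2 (by omega) (by omega))⟩
      · intro n ⟨hn, hs⟩
        have hq := psupp_quad hs
        omega
  · -- b1 = b2
    by_cases hb0 : b1 = 0
    · refine ⟨0, -1, ?_, ?_, Or.inr (Or.inr (Or.inl ⟨h, hb0, rfl, rfl⟩))⟩
      · refine csSup_union_eq le_rfl (Or.inl rfl) ?_
        intro n ⟨hn, hs⟩
        have hq := psupp_quad hs
        omega
      · refine csSup_union_eq le_rfl (Or.inl rfl) ?_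
        intro n ⟨hn, hs⟩
        have hq := psupp_quad hs
        omega
    · by_cases hw1 : w1 = 0
      · -- w1 = 0, so w2 ≥ 1, b1 ≥ 1
        refine ⟨(b1:ℤ) - 1, (b1:ℤ) - 1, ?_, ?_,
          Or.inr (Or.inr (Or.inr (Or.inl ⟨h, by omega, hw1, rfl, rfl⟩)))⟩
        · refine csSup_union_eq (by omega) ?_ ?_
          · by_cases hb1 : b1 = 1
            · exact Or.inl (by omega)
            · exact Or.inr ⟨by omega, psupp_congr (by omega) (by omega)
                (psupp_21 _ _ (by omega) (by omega))⟩
          · intro n ⟨hn, hs⟩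
            have hq := psupp_quad hs
            by_contra hcon
            exact npsupp_10 _ _ (by omega) (psupp_congr (by omega) (by omega) hs)
        · refine csSup_union_eq (by omega)
            (Or.inr ⟨by omega, psupp_congr (by omega) (by omega)
              (psupp_0c _ _ 1 hW1 hW2 (by omega) (by omega))⟩) ?_
          intro n ⟨hn, hs⟩
          have hq := psupp_quad hs
          omega
      · by_cases hw2 : w2 = 0
        · -- w2 = 0, w1 ≥ 1, b1 ≥ 1
          refine ⟨(b1:ℤ), (b1:ℤ) - 2, ?_, ?_,
            Or.inr (Or.inr (Or.inr (Or.inr (Or.inl ⟨h, by omega, hw2, rfl, rfl⟩))))⟩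
          · refine csSup_union_eq (by omega)
              (Or.inr ⟨by omega, psupp_congr (by omega) (by omega)
                (psupp_a0 _ _ 1 hW1 hW2 (by omega) (by omega))⟩) ?_
            intro n ⟨hn, hs⟩
            have hq := psupp_quad hs
            omega
          · refine csSup_union_eq (by omega) ?_ ?_
            · by_cases hb1 : b1 = 1
              · exact Or.inl (by omega)
              · exact Or.inr ⟨by omega, psupp_congr (by omega) (by omega)
                  (psupp_12 _ _ (by omega) (by omega))⟩
            · intro n ⟨hn, hs⟩
              have hq := psupp_quad hs
              by_contra hcon
              exact npsupp_01 _ _ (by omega) (psupp_congr (by omega) (by omega) hs)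
        · -- w1 ≥ 1, w2 ≥ 1, b1 ≥ 1
          refine ⟨(b1:ℤ), (b1:ℤ) - 1, ?_, ?_,
            Or.inr (Or.inr (Or.inr (Or.inr (Or.inr ⟨h, by omega, by omega, by omega, rfl, rfl⟩))))⟩
          · refine csSup_union_eq (by omega)
              (Or.inr ⟨by omega, psupp_congr (by omega) (by omega)
                (psupp_a0 _ _ 1 hW1 hW2 (by omega) (by omega))⟩) ?_
            intro n ⟨hn, hs⟩
            have hq := psupp_quad hs
            omega
          · refine csSup_union_eq (by omega)
              (Or.inr ⟨by omega, psupp_congr (by omega) (by omega)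
                (psupp_0c _ _ 1 hW1 hW2 (by omega) (by omega))⟩) ?_
            intro n ⟨hn, hs⟩
            have hq := psupp_quad hs
            omega
  · -- b2 < b1
    refine ⟨(b2:ℤ), (b2:ℤ), ?_, ?_, Or.inl ⟨h, rfl, rfl⟩⟩
    · refine csSup_union_eq (by omega) ?_ ?_
      · by_cases hb2 : b2 = 0
        · exact Or.inl (by omega)
        · exact Or.inr ⟨by omega, psupp_congr (by ring) (by ring)
            (psupp_a0 _ _ ((b1:ℤ) + 1 - b2) hW1 hW2 (by omega) (by omega))⟩
      · intro n ⟨hn, hs⟩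
        have hq := psupp_quad hs
        omega
    · refine csSup_union_eq (by omega)
        (Or.inr ⟨by omega, psupp_congr (by ring) (by ring)
          (psupp_dom' _ _ ((b1:ℤ) - 1 - b2) 0 hW1 hW2 (by omega) le_rfl (by omega) (by omega))⟩)
        ?_
      intro n ⟨hn, hs⟩
      have hq := psupp_quad hs
      omega




/-- For `e = 2`, `Λ = w_1Λ_1 + w_2Λ_2` and dominant
`μ = Λ − b_1α_1 − b_2α_2`, the pair `(k⁻_{12}, k⁺_{12})` has one of the forms `(n, n)`,
`(n, n−1)`, `(n+1, n−1)` for some integer `n ≥ 0`; moreover it equals `(n, n)` if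
`b_2 = n < b_1`, or `b_1 = b_2 = n+1` and `w_1 = 0`; it equals `(n, n−1)` if `b_1 = b_2 = n`
and `w_1 ≠ 0 ≠ w_2`; and it equals `(n+1, n−1)` if `b_1 = n < b_2`, or `b_1 = b_2 = n+1` and
`w_2 = 0`.  (Recall `k⁻_{12} = k⁺_{21}`.) -/
theorem kpair_e2 (w1 w2 : ℕ) (hw : 1 ≤ w1 + w2) (b1 b2 : ℕ)
    (Λ μ : ℕ → ℝ)
    (hΛ : Λ = (w1 : ℝ) • fundWt 2 1 + (w2 : ℝ) • fundWt 2 2)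
    (hμ : μ = Λ - (b1 : ℝ) • simpleRoot 2 1 - (b2 : ℝ) • simpleRoot 2 2)
    (hdom : Dominant 2 μ) :
    (∃ n : ℤ, 0 ≤ n ∧
      ((kplus 2 Λ μ 2 1, kplus 2 Λ μ 1 2) = (n, n) ∨
       (kplus 2 Λ μ 2 1, kplus 2 Λ μ 1 2) = (n, n - 1) ∨
       (kplus 2 Λ μ 2 1, kplus 2 Λ μ 1 2) = (n + 1, n - 1))) ∧
    (∀ n : ℤ, 0 ≤ n →
      ((((b2 : ℤ) = n ∧ n < (b1 : ℤ)) ∨ ((b1 : ℤ) = n + 1 ∧ (b2 : ℤ) = n + 1 ∧ w1 = 0)) →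
        (kplus 2 Λ μ 2 1, kplus 2 Λ μ 1 2) = (n, n)) ∧
      (((b1 : ℤ) = n ∧ (b2 : ℤ) = n ∧ w1 ≠ 0 ∧ w2 ≠ 0) →
        (kplus 2 Λ μ 2 1, kplus 2 Λ μ 1 2) = (n, n - 1)) ∧
      ((((b1 : ℤ) = n ∧ n < (b2 : ℤ)) ∨ ((b1 : ℤ) = n + 1 ∧ (b2 : ℤ) = n + 1 ∧ w2 = 0)) →
        (kplus 2 Λ μ 2 1, kplus 2 Λ μ 1 2) = (n + 1, n - 1))) := by
  have hL : Λ = wtv w1 w2 0 0 := by rw [hΛ, wtv_eq_Lam]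
  have hM : μ = wtv w1 w2 (b1:ℝ) (b2:ℝ) := by
    rw [hμ, hL, wtv_sub_root1, wtv_sub_root2]
    norm_num
  have h1 := hdom 1 le_rfl (by norm_num)
  have h2 := hdom 2 (by norm_num) le_rfl
  rw [hM, dot_coroot1] at h1
  rw [hM, dot_coroot2] at h2
  have hd1 : 0 ≤ (w1:ℤ) - 2*(b1:ℤ) + 2*(b2:ℤ) := by exact_mod_cast h1
  have hd2 : 0 ≤ (w2:ℤ) + 2*(b1:ℤ) - 2*(b2:ℤ) := by exact_mod_cast h2
  obtain ⟨KB, KA, hKB, hKA, hcase⟩ := central w1 w2 b1 b2 hw hd1 hd2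
  have e1 : kplus 2 Λ μ 2 1 = KB := by rw [hL, hM, kplus21_eq]; exact hKB
  have e2 : kplus 2 Λ μ 1 2 = KA := by rw [hL, hM, kplus12_eq]; exact hKA
  rw [e1, e2]
  constructor
  · rcases hcase with ⟨h, hb, ha⟩ | ⟨h, hb, ha⟩ | ⟨h, h0, hb, ha⟩ | ⟨h, h1', hww, hb, ha⟩ |
      ⟨h, h1', hww, hb, ha⟩ | ⟨h, h1', hw1', hw2', hb, ha⟩
    · exact ⟨(b2:ℤ), by omega, Or.inl (by rw [Prod.mk.injEq]; omega)⟩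
    · exact ⟨(b1:ℤ), by omega, Or.inr (Or.inr (by rw [Prod.mk.injEq]; omega))⟩
    · exact ⟨0, le_rfl, Or.inr (Or.inl (by rw [Prod.mk.injEq]; omega))⟩
    · exact ⟨(b1:ℤ) - 1, by omega, Or.inl (by rw [Prod.mk.injEq]; omega)⟩
    · exact ⟨(b1:ℤ) - 1, by omega, Or.inr (Or.inr (by rw [Prod.mk.injEq]; omega))⟩
    · exact ⟨(b1:ℤ), by omega, Or.inr (Or.inl (by rw [Prod.mk.injEq]; omega))⟩
  · intro n hn
    refine ⟨?_, ?_, ?_⟩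
    · rintro (⟨hbn, hlt⟩ | ⟨hb1, hb2, hw1⟩) <;>
        rcases hcase with ⟨h, hb, ha⟩ | ⟨h, hb, ha⟩ | ⟨h, h0, hb, ha⟩ | ⟨h, h1', hww, hb, ha⟩ |
          ⟨h, h1', hww, hb, ha⟩ | ⟨h, h1', hw1', hw2', hb, ha⟩ <;>
        (rw [Prod.mk.injEq]; constructor <;> omega)
    · rintro ⟨hb1, hb2, hw1, hw2⟩ <;>
        rcases hcase with ⟨h, hb, ha⟩ | ⟨h, hb, ha⟩ | ⟨h, h0, hb, ha⟩ | ⟨h, h1', hww, hb, ha⟩ |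
          ⟨h, h1', hww, hb, ha⟩ | ⟨h, h1', hw1', hw2', hb, ha⟩ <;>
        (rw [Prod.mk.injEq]; constructor <;> omega)
    · rintro (⟨hbn, hlt⟩ | ⟨hb1, hb2, hw2⟩) <;>
        rcases hcase with ⟨h, hb, ha⟩ | ⟨h, hb, ha⟩ | ⟨h, h0, hb, ha⟩ | ⟨h, h1', hww, hb, ha⟩ |
          ⟨h, h1', hww, hb, ha⟩ | ⟨h, h1', hw1', hw2', hb, ha⟩ <;>
        (rw [Prod.mk.injEq]; constructor <;> omega)


end SleHat
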